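/- Let p ≥ 1 be a real number, l and N positive integers, and set M = ⌊l/2^p⌋. If M ≤ N, then the number of vectors u ∈ ℤ^N all of whose coordinates are even and which satisfy Σᵢ |uᵢ|^p ≤ l is at most C(N, M)·(l+1)^M, where C(N, M) is a binomial coefficient. -/
import Mathlib


theorem stmt16 (p : ℝ) (hp : 1 ≤ p) (l N : ℕ) (hl : 0 < l) (hN : 0 < N)
    (M : ℕ) (hM : M = Nat.floor ((l : ℝ) / (2 : ℝ) ^ p)) (hMN : M ≤ N) :
    Set.ncard {u : Fin N → ℤ | (∀ i, Even (u i)) ∧ ∑ i, |(u i : ℝ)| ^ p ≤ (l : ℝ)} ≤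
      N.choose M * (l + 1) ^ M := by
  have h2p : (2:ℝ) ≤ (2:ℝ)^p := by
    nth_rewrite 1 [← Real.rpow_one 2]
    exact Real.rpow_le_rpow_of_exponent_le one_le_two hp
  have h2p0 : (0:ℝ) < (2:ℝ)^p := lt_of_lt_of_le two_pos h2p
  have hMl : (M:ℝ) ≤ (l:ℝ) / 2^p := by
    rw [hM]; exact Nat.floor_le (by positivity)
  set V : Finset ℤ := (Finset.Icc (-(M:ℤ)) M).image (fun k => 2*k) with hV
  have hVcard : V.card ≤ l + 1 := by
    have h1 : V.card ≤ 2*M + 1 := by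
      refine (Finset.card_image_le).trans ?_
      rw [Int.card_Icc]
      omega
    have h2 : 2*M ≤ l := by
      have : (2*(M:ℝ)) ≤ (l:ℝ) := by
        calc (2*(M:ℝ)) ≤ 2 * ((l:ℝ)/2^p) := by linarith
        _ ≤ 2^p * ((l:ℝ)/2^p) := by
            apply mul_le_mul_of_nonneg_right h2p (by positivity)
        _ = l := by field_simp
      exact_mod_cast this
    omega
  set F : Finset (Fin N → ℤ) :=
    (Finset.univ.powersetCard M).biUnion
      (fun T => Fintype.piFinset (fun i => if i ∈ T then V else ({0} : Finset ℤ))) with hF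
  have hsub : {u : Fin N → ℤ | (∀ i, Even (u i)) ∧ ∑ i, |(u i : ℝ)| ^ p ≤ (l : ℝ)} ⊆ ↑F := by
    intro u hu
    obtain ⟨heven, hsum⟩ := hu
    set s : Finset (Fin N) := Finset.univ.filter (fun i => u i ≠ 0) with hs
    have hterm_nonneg : ∀ i : Fin N, 0 ≤ |(u i : ℝ)|^p :=
      fun i => Real.rpow_nonneg (abs_nonneg _) _
    have habs2 : ∀ i : Fin N, u i ≠ 0 → (2:ℝ) ≤ |(u i : ℝ)| := by
      intro i hne
      have h1 : (1:ℤ) ≤ |u i| := Int.one_le_abs hne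
      obtain ⟨k, hk⟩ := heven i
      have heq : |u i| = |k| + |k| := by rw [hk, ← two_mul, abs_mul, abs_two]; ring
      have h2 : (2:ℤ) ≤ |u i| := by omega
      calc (2:ℝ) = ((2:ℤ):ℝ) := by norm_num
      _ ≤ ((|u i|:ℤ):ℝ) := by exact_mod_cast h2
      _ = |(u i : ℝ)| := by push_cast; ring
    have hterm : ∀ i ∈ s, (2:ℝ)^p ≤ |(u i : ℝ)|^p := by
      intro i hi
      have hne : u i ≠ 0 := (Finset.mem_filter.mp hi).2
      exact Real.rpow_le_rpow (by norm_num) (habs2 i hne) (le_trans zero_le_one hp)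
    have hsingle : ∀ i : Fin N, |(u i : ℝ)|^p ≤ (l:ℝ) := by
      intro i
      refine le_trans ?_ hsum
      exact Finset.single_le_sum (fun j _ => hterm_nonneg j) (Finset.mem_univ i)
    have hcard_s : s.card ≤ M := by
      have key : (s.card : ℝ) * 2^p ≤ l := by
        calc (s.card:ℝ) * 2^p = ∑ _i ∈ s, (2:ℝ)^p := by rw [Finset.sum_const, nsmul_eq_mul]
        _ ≤ ∑ i ∈ s, |(u i:ℝ)|^p := Finset.sum_le_sum hterm
        _ ≤ ∑ i, |(u i:ℝ)|^p := Finset.sum_le_sum_of_subset_of_nonneg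
              (Finset.subset_univ s) (fun i _ _ => hterm_nonneg i)
        _ ≤ l := hsum
      rw [hM]
      apply Nat.le_floor
      rw [le_div_iff₀ h2p0]
      exact key
    obtain ⟨T, hsT, hTcard⟩ := Finset.exists_superset_card_eq hcard_s
      (by simpa using hMN)
    rw [Finset.mem_coe, hF, Finset.mem_biUnion]
    refine ⟨T, by simp [Finset.mem_powersetCard_univ, hTcard], ?_⟩
    rw [Fintype.mem_piFinset]
    intro i
    by_cases hi : i ∈ T
    · simp only [hi, if_true]
      obtain ⟨k, hk⟩ := heven i
      have hkM : k.natAbs ≤ M := by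
        have hcase : k = 0 ∨ 1 ≤ |k| := by rcases abs_cases k with ⟨h,h'⟩|⟨h,h'⟩ <;> omega
        rcases hcase with h0 | h1
        · simp [h0]
        · have habs : |(u i : ℝ)| = 2 * |(k:ℝ)| := by
            rw [hk]; push_cast; rw [← two_mul, abs_mul]; norm_num
          have hrp : (2:ℝ)^p * |(k:ℝ)|^p ≤ l := by
            rw [← Real.mul_rpow (by norm_num) (abs_nonneg _), ← habs]
            exact hsingle i
          have hk1 : (1:ℝ) ≤ |(k:ℝ)| := by exact_mod_cast h1
          have hkrp : |(k:ℝ)| ≤ |(k:ℝ)|^p := by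
            nth_rewrite 1 [← Real.rpow_one |(k:ℝ)|]
            exact Real.rpow_le_rpow_of_exponent_le hk1 hp
          have : (k.natAbs : ℝ) ≤ (l:ℝ)/2^p := by
            rw [le_div_iff₀ h2p0]
            calc (k.natAbs : ℝ) * 2^p = 2^p * |(k:ℝ)| := by
                  rw [Nat.cast_natAbs, mul_comm]; push_cast; ring
            _ ≤ 2^p * |(k:ℝ)|^p := by
                  apply mul_le_mul_of_nonneg_left hkrp (le_of_lt h2p0)
            _ ≤ l := hrp
          rw [hM]
          exact Nat.le_floor this
      rw [hV, Finset.mem_image]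
      refine ⟨k, Finset.mem_Icc.mpr (by omega), by omega⟩
    · simp only [hi, if_false, Finset.mem_singleton]
      by_contra hne
      exact hi (hsT (Finset.mem_filter.mpr ⟨Finset.mem_univ i, hne⟩))
  calc Set.ncard {u : Fin N → ℤ | (∀ i, Even (u i)) ∧ ∑ i, |(u i : ℝ)| ^ p ≤ (l : ℝ)}
      ≤ Set.ncard (↑F : Set (Fin N → ℤ)) :=
        Set.ncard_le_ncard hsub (F.finite_toSet)
  _ = F.card := Set.ncard_coe_finset F
  _ ≤ ∑ T ∈ Finset.univ.powersetCard M,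
        (Fintype.piFinset (fun i => if i ∈ T then V else ({0} : Finset ℤ))).card :=
        Finset.card_biUnion_le
  _ ≤ ∑ _T ∈ Finset.univ.powersetCard M, (l+1)^M := by
      apply Finset.sum_le_sum
      intro T hT
      have hTcard : T.card = M := (Finset.mem_powersetCard.mp hT).2
      rw [Fintype.card_piFinset]
      calc ∏ i, (if i ∈ T then V else ({0}:Finset ℤ)).card
          = ∏ i, (if i ∈ T then V.card else 1) := by
            apply Finset.prod_congr rfl
            intro i _
            rw [apply_ite Finset.card, Finset.card_singleton]
      _ = ∏ i ∈ T, V.card := by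
            rw [Finset.prod_ite_mem, Finset.univ_inter]
      _ = V.card ^ M := by rw [Finset.prod_const, hTcard]
      _ ≤ (l+1)^M := Nat.pow_le_pow_left hVcard M
  _ = N.choose M * (l+1)^M := by
      rw [Finset.sum_const, smul_eq_mul, Finset.card_powersetCard, Finset.card_univ,
        Fintype.card_fin]
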